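/- arXiv:2012.04848 — 3 statements merged into one kernel-verified Lean document; each statement's English description precedes it below -/
import Mathlib

section
/- Projection lemma: Let H₁ and H₂ be Hermitian operators on a nonzero finite-dimensional complex inner product space H, and let S ⊆ H be a nonzero subspace with orthogonal complement S⊥. Assume H₂ v = 0 for every v ∈ S, and assume there is a real number J > 2‖H₁‖ such that ⟨v, H₂ v⟩ ≥ J‖v‖² for every v ∈ S⊥. Then λ(H₁|_S) − ‖H₁‖²/(J − 2‖H₁‖) ≤ λ(H₁ + H₂) ≤ λ(H₁|_S). (Lemma A.2 of the paper, after Kempe–Kitaev–Regev.) -/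
open scoped ComplexInnerProductSpace

/-- The smallest eigenvalue of a Hermitian operator `A`, i.e. the infimum of
`⟨v, A v⟩` over unit vectors `v`. -/
noncomputable def lambdaMin {H : Type*} [NormedAddCommGroup H] [InnerProductSpace ℂ H]
    (A : H →L[ℂ] H) : ℝ :=
  ⨅ v : {v : H // ‖v‖ = 1}, (⟪(v : H), A v⟫).re

/-- The smallest eigenvalue of the compression of `A` to a subspace `S`, i.e. the
infimum of `⟨v, A v⟩` over unit vectors `v ∈ S`. -/
noncomputable def lambdaMinOn {H : Type*} [NormedAddCommGroup H] [InnerProductSpace ℂ H]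
    (A : H →L[ℂ] H) (S : Submodule ℂ H) : ℝ :=
  ⨅ v : {v : H // v ∈ S ∧ ‖v‖ = 1}, (⟪(v : H), A v⟫).re

section Aux

variable {H : Type*} [NormedAddCommGroup H] [InnerProductSpace ℂ H]

lemma abs_re_inner_le (A : H →L[ℂ] H) (x y : H) :
    |(⟪x, A y⟫).re| ≤ ‖A‖ * ‖x‖ * ‖y‖ := by
  calc |(⟪x, A y⟫).re| ≤ ‖(⟪x, A y⟫ : ℂ)‖ := Complex.abs_re_le_norm _
    _ ≤ ‖x‖ * ‖A y‖ := norm_inner_le_norm _ _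
    _ ≤ ‖x‖ * (‖A‖ * ‖y‖) := by
        gcongr
        exact A.le_opNorm y
    _ = ‖A‖ * ‖x‖ * ‖y‖ := by ring

lemma bdd_lambdaMin (A : H →L[ℂ] H) :
    BddBelow (Set.range fun v : {v : H // ‖v‖ = 1} => (⟪(v : H), A v⟫).re) := by
  refine ⟨-‖A‖, ?_⟩
  rintro _ ⟨v, rfl⟩
  have := abs_re_inner_le A (v : H) (v : H)
  rw [v.2] at this
  simp only [mul_one] at this
  linarith [(abs_le.mp this).1]

lemma bdd_lambdaMinOn (A : H →L[ℂ] H) (S : Submodule ℂ H) :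
    BddBelow (Set.range fun v : {v : H // v ∈ S ∧ ‖v‖ = 1} => (⟪(v : H), A v⟫).re) := by
  refine ⟨-‖A‖, ?_⟩
  rintro _ ⟨v, rfl⟩
  have := abs_re_inner_le A (v : H) (v : H)
  rw [v.2.2] at this
  simp only [mul_one] at this
  linarith [(abs_le.mp this).1]

lemma lambdaMin_le (A : H →L[ℂ] H) {v : H} (hv : ‖v‖ = 1) :
    lambdaMin A ≤ (⟪v, A v⟫).re :=
  ciInf_le (bdd_lambdaMin A) ⟨v, hv⟩

lemma lambdaMinOn_le (A : H →L[ℂ] H) (S : Submodule ℂ H) {v : H} (hvS : v ∈ S)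
    (hv : ‖v‖ = 1) : lambdaMinOn A S ≤ (⟪v, A v⟫).re :=
  ciInf_le (bdd_lambdaMinOn A S) ⟨v, hvS, hv⟩

lemma lambdaMinOn_mul_le (A : H →L[ℂ] H) (S : Submodule ℂ H) {v : H} (hvS : v ∈ S) :
    lambdaMinOn A S * ‖v‖ ^ 2 ≤ (⟪v, A v⟫).re := by
  rcases eq_or_ne v 0 with rfl | hv0
  · simp
  · have hn : ‖v‖ ≠ 0 := norm_ne_zero_iff.mpr hv0
    have hnpos : (0:ℝ) < ‖v‖ := norm_pos_iff.mpr hv0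
    set u : H := ((‖v‖⁻¹ : ℝ) : ℂ) • v with hu
    have huS : u ∈ S := S.smul_mem _ hvS
    have hun : ‖u‖ = 1 := by
      rw [hu, norm_smul]
      simp [abs_of_pos (inv_pos.mpr hnpos), inv_mul_cancel₀ hn]
    have hle := lambdaMinOn_le A S huS hun
    have hre : (⟪u, A u⟫).re = (‖v‖⁻¹)^2 * (⟪v, A v⟫).re := by
      rw [hu, map_smul, inner_smul_left, inner_smul_right, Complex.conj_ofReal,
        ← mul_assoc, ← Complex.ofReal_mul, Complex.re_ofReal_mul]
      ring
    rw [hre] at hle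
    have h2 : lambdaMinOn A S * ‖v‖^2 ≤ (‖v‖⁻¹)^2 * (⟪v, A v⟫).re * ‖v‖^2 := by
      nlinarith [sq_nonneg ‖v‖]
    calc lambdaMinOn A S * ‖v‖^2 ≤ (‖v‖⁻¹)^2 * (⟪v, A v⟫).re * ‖v‖^2 := h2
      _ = (⟪v, A v⟫).re := by field_simp

lemma arith_step (L K J a b T1 T2 T3 T4 : ℝ) (hJ : J > 2*K) (hK0 : 0 ≤ K)
    (hlamK : L ≤ K) (hab : a^2 + b^2 = 1) (ha0 : 0 ≤ a) (hb0 : 0 ≤ b) (ha1 : a ≤ 1)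
    (hT1 : L*a^2 ≤ T1) (hT2 : -(K*a*b) ≤ T2) (hT3 : -(K*b*b) ≤ T3)
    (hT4 : J*b^2 ≤ T4) :
    L - K^2/(J - 2*K) ≤ T1 + 2*T2 + T3 + T4 := by
  have hD : 0 < J - 2*K := by linarith
  have h5 : 0 ≤ (J - 2*K)*b^2 - 2*(K*b) + K^2/(J - 2*K) := by
    have hs := sq_nonneg ((J - 2*K)*b - K)
    have hring : (J - 2*K) * ((J - 2*K)*b^2 - 2*(K*b) + K^2/(J - 2*K))
        = ((J - 2*K)*b - K)^2 := by
      field_simp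
      ring
    nlinarith [hs, hD, hring]
  have e1 : L * a^2 = L - L * b^2 := by linear_combination L * hab
  have e2 : L * b^2 ≤ K * b^2 := by
    nlinarith [mul_nonneg (sub_nonneg.mpr hlamK) (sq_nonneg b)]
  have e3 : K*a*b ≤ K*b := by
    nlinarith [mul_nonneg (mul_nonneg hK0 hb0) (sub_nonneg.mpr ha1)]
  nlinarith [h5, e1, e2, e3, hT1, hT2, hT3, hT4]

end Aux

/-- **Lemma A.2 (projection lemma).** Let `H₁, H₂` be Hermitian operators on a nonzero
finite-dimensional complex inner product space, `S` a nonzero subspace with `H₂ v = 0`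
for `v ∈ S`, and suppose `⟨v, H₂ v⟩ ≥ J ‖v‖²` on `S⊥` for some `J > 2‖H₁‖`. Then
`λ(H₁|_S) − ‖H₁‖²/(J − 2‖H₁‖) ≤ λ(H₁ + H₂) ≤ λ(H₁|_S)`. -/
theorem projection_lemma {H : Type*} [NormedAddCommGroup H] [InnerProductSpace ℂ H]
    [FiniteDimensional ℂ H] [Nontrivial H]
    (H1 H2 : H →L[ℂ] H)
    (h1 : ∀ x y : H, ⟪H1 x, y⟫ = ⟪x, H1 y⟫)
    (h2 : ∀ x y : H, ⟪H2 x, y⟫ = ⟪x, H2 y⟫)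
    (S : Submodule ℂ H) (hS : S ≠ ⊥)
    (hker : ∀ v ∈ S, H2 v = 0)
    (J : ℝ) (hJ : J > 2 * ‖H1‖)
    (hgap : ∀ v ∈ Sᗮ, (⟪v, H2 v⟫).re ≥ J * ‖v‖ ^ 2) :
    lambdaMinOn H1 S - ‖H1‖ ^ 2 / (J - 2 * ‖H1‖) ≤ lambdaMin (H1 + H2) ∧
      lambdaMin (H1 + H2) ≤ lambdaMinOn H1 S := by
  -- a unit vector in S
  obtain ⟨w, hwS, hw0⟩ := Submodule.exists_mem_ne_zero_of_ne_bot hS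
  have hwn : ‖w‖ ≠ 0 := norm_ne_zero_iff.mpr hw0
  set u : H := ((‖w‖⁻¹ : ℝ) : ℂ) • w with hu
  have huS : u ∈ S := S.smul_mem _ hwS
  have hun : ‖u‖ = 1 := by
    rw [hu, norm_smul]
    simp [abs_of_pos (inv_pos.mpr (norm_pos_iff.mpr hw0)), inv_mul_cancel₀ hwn]
  haveI : Nonempty {v : H // v ∈ S ∧ ‖v‖ = 1} := ⟨⟨u, huS, hun⟩⟩
  haveI : Nonempty {v : H // ‖v‖ = 1} := ⟨⟨u, hun⟩⟩
  set K := ‖H1‖ with hK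
  have hK0 : 0 ≤ K := norm_nonneg _
  have hD : 0 < J - 2 * K := by linarith
  have hlamK : lambdaMinOn H1 S ≤ K := by
    have := lambdaMinOn_le H1 S huS hun
    have h2 := abs_re_inner_le H1 u u
    rw [hun] at h2
    simp only [mul_one] at h2
    linarith [(abs_le.mp h2).2]
  constructor
  · -- lower bound
    rw [lambdaMin]
    refine le_ciInf fun ⟨v, hv⟩ => ?_
    set v₁ : H := (S.orthogonalProjectionOnto v : H) with hv₁def
    set v₂ : H := v - v₁ with hv₂def
    have hv₁S : v₁ ∈ S := (S.orthogonalProjectionOnto v).2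
    have hv₂S : v₂ ∈ Sᗮ := S.sub_starProjection_mem_orthogonal v
    have hsum : v = v₁ + v₂ := by rw [hv₂def]; abel
    have hperp : (⟪v₁, v₂⟫ : ℂ) = 0 :=
      Submodule.inner_right_of_mem_orthogonal hv₁S hv₂S
    set a := ‖v₁‖ with ha
    set b := ‖v₂‖ with hb
    have hab : a ^ 2 + b ^ 2 = 1 := by
      have := norm_add_sq_eq_norm_sq_add_norm_sq_of_inner_eq_zero v₁ v₂ hperp
      rw [← hsum, hv] at this
      simp only [sq, ha, hb]
      linarith
    have ha0 : 0 ≤ a := norm_nonneg _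
    have hb0 : 0 ≤ b := norm_nonneg _
    have ha1 : a ≤ 1 := by nlinarith
    -- expansion
    have hH2v₁ : H2 v₁ = 0 := hker v₁ hv₁S
    have hterm12 : (⟪v₁, H2 v₂⟫ : ℂ) = 0 := by
      rw [← h2 v₁ v₂, hH2v₁, inner_zero_left]
    have hterm21re : (⟪v₂, H1 v₁⟫ : ℂ).re = (⟪v₁, H1 v₂⟫ : ℂ).re := by
      have : (⟪v₂, H1 v₁⟫ : ℂ) = starRingEnd ℂ (⟪v₁, H1 v₂⟫ : ℂ) := by
        rw [← h1 v₁ v₂, ← inner_conj_symm]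
      rw [this, Complex.conj_re]
    have hE : (⟪v, (H1 + H2) v⟫ : ℂ).re =
        (⟪v₁, H1 v₁⟫ : ℂ).re + 2 * (⟪v₁, H1 v₂⟫ : ℂ).re + (⟪v₂, H1 v₂⟫ : ℂ).re
          + (⟪v₂, H2 v₂⟫ : ℂ).re := by
      rw [hsum]
      simp only [ContinuousLinearMap.add_apply, map_add, hH2v₁, zero_add,
        inner_add_left, inner_add_right, hterm12]
      simp [Complex.add_re, hterm21re]
      ring
    -- bound each term
    have hT1 : lambdaMinOn H1 S * a ^ 2 ≤ (⟪v₁, H1 v₁⟫ : ℂ).re := by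
      simpa [ha] using lambdaMinOn_mul_le H1 S hv₁S
    have hT2 : -(K * a * b) ≤ (⟪v₁, H1 v₂⟫ : ℂ).re := by
      have := abs_re_inner_le H1 v₁ v₂
      linarith [(abs_le.mp this).1]
    have hT3 : -(K * b * b) ≤ (⟪v₂, H1 v₂⟫ : ℂ).re := by
      have := abs_re_inner_le H1 v₂ v₂
      linarith [(abs_le.mp this).1]
    have hT4 : J * b ^ 2 ≤ (⟪v₂, H2 v₂⟫ : ℂ).re := hgap v₂ hv₂S
    rw [hE]
    exact arith_step _ K J a b _ _ _ _ hJ hK0 hlamK hab ha0 hb0 ha1 hT1 hT2 hT3 hT4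
  · -- upper bound
    rw [lambdaMinOn]
    refine le_ciInf fun ⟨v, hvS, hv⟩ => ?_
    have := lambdaMin_le (H1 + H2) hv
    have hz : (⟪v, (H1 + H2) v⟫ : ℂ) = ⟪v, H1 v⟫ := by
      simp [ContinuousLinearMap.add_apply, hker v hvS, inner_add_right]
    rw [hz] at this
    exact this
end

section
/- Let H be a Hermitian operator on a nonzero finite-dimensional complex inner product space, let ψ be a unit vector with H ψ = 0, and suppose ⟨φ, H φ⟩ ≥ (3/4)‖φ‖² for every vector φ orthogonal to ψ. Let ρ be a positive semidefinite operator with trace 1 (a density operator) satisfying Tr(H ρ) ≤ ε for some 0 < ε < 1. Then ⟨ψ, ρ ψ⟩ ≥ 1 − (4/3)ε. (Mixed-state overlap bound underlying Theorem A.7.) -/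
open scoped ComplexInnerProductSpace

lemma trace_eq_sum_inner' {H : Type*} [NormedAddCommGroup H]
    [InnerProductSpace ℂ H] [FiniteDimensional ℂ H] {ι : Type*} [Fintype ι] [DecidableEq ι]
    (b : OrthonormalBasis ι ℂ H) (T : H →ₗ[ℂ] H) :
    LinearMap.trace ℂ H T = ∑ i, ⟪b i, T (b i)⟫ := by
  rw [LinearMap.trace_eq_matrix_trace ℂ b.toBasis, Matrix.trace]
  congr 1
  ext i
  rw [Matrix.diag_apply, LinearMap.toMatrix_apply, OrthonormalBasis.coe_toBasis,
    OrthonormalBasis.coe_toBasis_repr_apply, b.repr_apply_apply]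

lemma key_pointwise {H : Type*} [NormedAddCommGroup H] [InnerProductSpace ℂ H]
    (A : H →ₗ[ℂ] H)
    (hHerm : ∀ x y : H, ⟪A x, y⟫ = ⟪x, A y⟫)
    (ψ : H) (hψ : ‖ψ‖ = 1) (hground : A ψ = 0)
    (hgap : ∀ φ : H, ⟪ψ, φ⟫ = 0 → (⟪φ, A φ⟫).re ≥ (3 / 4) * ‖φ‖ ^ 2)
    (v : H) : (3 / 4) * (‖v‖ ^ 2 - ‖⟪ψ, v⟫‖ ^ 2) ≤ (⟪v, A v⟫).re := by
  set c := ⟪ψ, v⟫ with hc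
  set φ := v - c • ψ with hφ
  have hψψ : ⟪ψ, ψ⟫ = 1 := by
    rw [inner_self_eq_norm_sq_to_K, hψ]; norm_num
  have hφψ : ⟪ψ, φ⟫ = 0 := by
    simp [hφ, inner_sub_right, inner_smul_right, hψψ, hψ, hc]
  have hv : v = φ + c • ψ := by simp [hφ]
  have hAv : A v = A φ := by
    rw [hv, map_add, map_smul, hground, smul_zero, add_zero]
  have hψAφ : ⟪ψ, A φ⟫ = 0 := by
    rw [← hHerm, hground, inner_zero_left]
  have h1 : ⟪v, A v⟫ = ⟪φ, A φ⟫ := by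
    rw [hAv]
    nth_rw 1 [hv]
    rw [inner_add_left, inner_smul_left, hψAφ, mul_zero, add_zero]
  have hφψ' : ⟪φ, ψ⟫ = 0 := by
    rw [← inner_conj_symm, hφψ, map_zero]
  have hnorm : ‖v‖ ^ 2 = ‖φ‖ ^ 2 + ‖c‖ ^ 2 := by
    rw [hv, @norm_add_sq ℂ, inner_smul_right, hφψ']
    simp [norm_smul, hψ]
  have := hgap φ hφψ
  rw [h1]
  calc (3 / 4) * (‖v‖ ^ 2 - ‖⟪ψ, v⟫‖ ^ 2) = (3 / 4) * ‖φ‖ ^ 2 := by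
        rw [hnorm, ← hc]; ring
    _ ≤ (⟪φ, A φ⟫).re := this


/-- **Mixed-state overlap bound underlying Theorem A.7.** Let `A` be a Hermitian
operator on a nonzero finite-dimensional complex inner product space with unit ground
state `ψ` of eigenvalue `0` and spectral gap at least `3/4` (i.e.
`⟨φ, A φ⟩ ≥ (3/4)‖φ‖²` for all `φ ⊥ ψ`). Let `ρ` be a density operator (positive
semidefinite of trace `1`) with `Tr(A ρ) ≤ ε` for some `0 < ε < 1`. Then
`⟨ψ, ρ ψ⟩ ≥ 1 − (4/3)ε`. -/
theorem low_energy_density_overlap {H : Type*} [NormedAddCommGroup H]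
    [InnerProductSpace ℂ H] [FiniteDimensional ℂ H] [Nontrivial H]
    (A : H →ₗ[ℂ] H)
    (hHerm : ∀ x y : H, ⟪A x, y⟫ = ⟪x, A y⟫)
    (ψ : H) (hψ : ‖ψ‖ = 1) (hground : A ψ = 0)
    (hgap : ∀ φ : H, ⟪ψ, φ⟫ = 0 → (⟪φ, A φ⟫).re ≥ (3 / 4) * ‖φ‖ ^ 2)
    (ρ : H →ₗ[ℂ] H)
    (hρHerm : ∀ x y : H, ⟪ρ x, y⟫ = ⟪x, ρ y⟫)
    (hρpos : ∀ v : H, 0 ≤ (⟪v, ρ v⟫).re)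
    (hρtr : LinearMap.trace ℂ H ρ = 1)
    (ε : ℝ) (hε0 : 0 < ε) (hε1 : ε < 1)
    (hE : (LinearMap.trace ℂ H (A ∘ₗ ρ)).re ≤ ε) :
    (⟪ψ, ρ ψ⟫).re ≥ 1 - (4 / 3) * ε := by
  have hρsym : ρ.IsSymmetric := hρHerm
  have hn : Module.finrank ℂ H = Module.finrank ℂ H := rfl
  set b := hρsym.eigenvectorBasis hn with hb
  set μ := hρsym.eigenvalues hn with hμ
  have happly : ∀ i, ρ (b i) = (μ i : ℂ) • b i := fun i =>
    hρsym.apply_eigenvectorBasis hn i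
  have hbi : ∀ i, ‖b i‖ = 1 := fun i => b.orthonormal.1 i
  have hbii : ∀ i, ⟪b i, b i⟫ = 1 := fun i => by
    rw [inner_self_eq_norm_sq_to_K, hbi]; norm_num
  -- eigenvalues nonneg
  have hμ0 : ∀ i, 0 ≤ μ i := by
    intro i
    have := hρpos (b i)
    rwa [happly, inner_smul_right, hbii, mul_one, Complex.ofReal_re] at this
  -- sum of eigenvalues = 1
  have htrρ : ∑ i, μ i = 1 := by
    have h := trace_eq_sum_inner' b ρ
    rw [hρtr] at h
    have : (1 : ℂ) = ∑ i, (μ i : ℂ) := by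
      rw [h]
      congr 1; ext i
      rw [happly, inner_smul_right, hbii, mul_one]
    have := congrArg Complex.re this
    simpa using this.symm
  set c : Fin (Module.finrank ℂ H) → ℂ := fun i => ⟪b i, ψ⟫ with hcdef
  -- overlap expansion
  have hoverlap : (⟪ψ, ρ ψ⟫).re = ∑ i, μ i * ‖c i‖ ^ 2 := by
    have hψexp : ψ = ∑ i, c i • b i := (b.sum_repr' ψ).symm
    have key : ⟪ψ, ρ ψ⟫ = ((∑ i, μ i * ‖c i‖ ^ 2 : ℝ) : ℂ) := by
      push_cast
      nth_rw 2 [hψexp]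
      rw [map_sum]
      simp_rw [map_smul, happly, smul_smul, inner_sum, inner_smul_right]
      congr 1; ext i
      nth_rw 1 [hψexp]
      rw [sum_inner]
      rw [Finset.sum_eq_single i]
      · rw [inner_smul_left, hbii, mul_one]
        have hcc2 : c i * (starRingEnd ℂ) (c i) = ((‖c i‖ : ℂ)) ^ 2 := by
          rw [Complex.mul_conj, Complex.normSq_eq_norm_sq]
          push_cast
          ring
        calc c i * (μ i : ℂ) * (starRingEnd ℂ) (c i)
            = (μ i : ℂ) * (c i * (starRingEnd ℂ) (c i)) := by ring
          _ = (μ i : ℂ) * (‖c i‖ : ℂ) ^ 2 := by rw [hcc2]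
      · intro j _ hj
        rw [inner_smul_left, b.orthonormal.2 hj, mul_zero]
      · intro h; exact absurd (Finset.mem_univ i) h
    rw [key, Complex.ofReal_re]
  -- energy expansion and bound
  have henergy : ∑ i, μ i * (⟪b i, A (b i)⟫).re ≤ ε := by
    have h := trace_eq_sum_inner' b (A ∘ₗ ρ)
    have : (LinearMap.trace ℂ H (A ∘ₗ ρ)).re = ∑ i, μ i * (⟪b i, A (b i)⟫).re := by
      rw [h, Complex.re_sum]
      congr 1; ext i
      rw [LinearMap.comp_apply, happly, map_smul, inner_smul_right]
      simp [Complex.ofReal_re, Complex.mul_re]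
    linarith [hE, this ▸ hE]
  -- each term bound
  have hterm : ∀ i, (3 / 4) * (μ i * (1 - ‖c i‖ ^ 2)) ≤ μ i * (⟪b i, A (b i)⟫).re := by
    intro i
    have hk := key_pointwise A hHerm ψ hψ hground hgap (b i)
    have hcc : ‖(⟪ψ, b i⟫ : ℂ)‖ = ‖c i‖ := by
      rw [← inner_conj_symm ψ (b i), RCLike.norm_conj]
    rw [hbi, hcc] at hk
    have := mul_le_mul_of_nonneg_left hk (hμ0 i)
    calc (3 / 4) * (μ i * (1 - ‖c i‖ ^ 2)) = μ i * ((3/4) * (1 ^ 2 - ‖c i‖ ^ 2)) := by ring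
      _ ≤ μ i * (⟪b i, A (b i)⟫).re := this
  have hsum : (3 / 4) * (1 - ∑ i, μ i * ‖c i‖ ^ 2) ≤ ε := by
    have h1 : ∑ i, (3 / 4) * (μ i * (1 - ‖c i‖ ^ 2)) ≤ ∑ i, μ i * (⟪b i, A (b i)⟫).re :=
      Finset.sum_le_sum fun i _ => hterm i
    have h2 : ∑ i, (3 / 4) * (μ i * (1 - ‖c i‖ ^ 2))
        = (3 / 4) * ((∑ i, μ i) - ∑ i, μ i * ‖c i‖ ^ 2) := by
      rw [← Finset.sum_sub_distrib, Finset.mul_sum]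
      congr 1; ext i; ring
    rw [htrρ] at h2
    linarith
  rw [hoverlap]
  linarith
end

section
/- Kernel and spectral gap of the clock Hamiltonian: For T ≥ 2, let H_clock = ∑_{t=1}^{T−1} |01⟩⟨01|_{t,t+1} acting on the T-qubit space (ℂ²)^{⊗T}. Then (i) the kernel of H_clock is exactly the span of the T+1 unary computational basis states |1^t 0^{T−t}⟩ for t = 0, 1, …, T (i.e., basis strings of the form 1…10…0); and (ii) for every vector φ orthogonal to this kernel, ⟨φ, H_clock φ⟩ ≥ ‖φ‖², i.e., λ(H_clock|_{K⊥}) ≥ 1 where K = ker H_clock. -/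
open scoped ComplexInnerProductSpace

/-- The diagonal operator on the `q`-qubit space `(ℂ²)^{⊗q}` (with computational basis
indexed by bit strings `Fin q → Bool`) whose diagonal entries are given by `c`. -/
noncomputable def qubitDiag {q : ℕ} (c : (Fin q → Bool) → ℂ) :
    EuclideanSpace ℂ (Fin q → Bool) →ₗ[ℂ] EuclideanSpace ℂ (Fin q → Bool) where
  toFun f := WithLp.toLp 2 (fun b => c b * f b)
  map_add' f g := by
    ext b
    simp [mul_add]
  map_smul' a f := by
    ext b
    simp [smul_eq_mul]
    ring

/-- The projector `|01⟩⟨01|_{s,t}` onto computational basis states `b` with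
`b_s = 0` and `b_t = 1`. -/
noncomputable def proj01 {q : ℕ} (s t : Fin q) :
    EuclideanSpace ℂ (Fin q → Bool) →ₗ[ℂ] EuclideanSpace ℂ (Fin q → Bool) :=
  qubitDiag (fun b => if b s = false ∧ b t = true then 1 else 0)

/-- The clock Hamiltonian `H_clock = ∑_{t=0}^{T−2} |01⟩⟨01|_{t,t+1}` on `T = n + 2`
qubits. -/
noncomputable def Hclock (n : ℕ) :
    EuclideanSpace ℂ (Fin (n + 2) → Bool) →ₗ[ℂ] EuclideanSpace ℂ (Fin (n + 2) → Bool) :=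
  ∑ t : Fin (n + 1), proj01 t.castSucc t.succ

/-- The unary clock basis state `|1^t 0^{T−t}⟩` for `0 ≤ t ≤ T`, as an element of the
`T`-qubit space (`T = n + 2`, `t : Fin (n + 3)`). -/
noncomputable def unaryState (n : ℕ) (t : Fin (n + 3)) :
    EuclideanSpace ℂ (Fin (n + 2) → Bool) :=
  EuclideanSpace.single (fun i : Fin (n + 2) => decide ((i : ℕ) < (t : ℕ))) (1 : ℂ)

def cnt (n : ℕ) (b : Fin (n + 2) → Bool) : ℕ :=
  (Finset.univ.filter (fun t : Fin (n + 1) => b t.castSucc = false ∧ b t.succ = true)).card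

lemma Hclock_apply (n : ℕ) (f : EuclideanSpace ℂ (Fin (n + 2) → Bool)) (b : Fin (n + 2) → Bool) :
    Hclock n f b = (cnt n b : ℂ) * f b := by
  simp only [Hclock, LinearMap.sum_apply, proj01, qubitDiag, LinearMap.coe_mk, AddHom.coe_mk]
  rw [WithLp.ofLp_sum, Finset.sum_apply]
  simp only [WithLp.ofLp_toLp]
  rw [← Finset.sum_mul, Finset.sum_boole, cnt]

lemma good_iff (n : ℕ) (b : Fin (n + 2) → Bool) :
    (∀ t : Fin (n + 1), ¬(b t.castSucc = false ∧ b t.succ = true)) ↔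
      ∃ t : Fin (n + 3), b = fun i : Fin (n + 2) => decide ((i : ℕ) < (t : ℕ)) := by
  constructor
  · intro h
    have hmono : ∀ i j : Fin (n + 2), i ≤ j → b j = true → b i = true := by
      intro i j hij hbj
      obtain ⟨k, hk⟩ : ∃ k, (j : ℕ) = (i : ℕ) + k := ⟨j - i, by omega⟩
      induction k generalizing j with
      | zero => have : i = j := Fin.ext (by omega); rwa [this]
      | succ m ih =>
        have hj0 : 0 < (j : ℕ) := by omega
        set j' : Fin (n + 2) := ⟨(j : ℕ) - 1, by omega⟩
        have hjlt : ((j : ℕ) - 1) < n + 1 := by omega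
        have := h ⟨(j : ℕ) - 1, hjlt⟩
        have hcs : (Fin.castSucc ⟨(j : ℕ) - 1, hjlt⟩) = j' := rfl
        have hss : (Fin.succ ⟨(j : ℕ) - 1, hjlt⟩) = j := Fin.ext (by simp [Fin.succ]; omega)
        rw [hcs, hss] at this
        have hbj' : b j' = true := by
          rcases Bool.eq_false_or_eq_true (b j') with h1 | h0
          · exact h1
          · exact absurd ⟨h0, hbj⟩ this
        exact ih j' (by simp [j', Fin.le_def]; omega) hbj' (by simp [j']; omega)
    set S := Finset.univ.filter (fun i : Fin (n + 2) => b i = true) with hS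
    have hcard : S.card < n + 3 := by
      have h1 : S.card ≤ Finset.univ.card := Finset.card_le_univ S
      simp at h1
      omega
    refine ⟨⟨S.card, hcard⟩, ?_⟩
    funext i
    have key : b i = true ↔ (i : ℕ) < S.card := by
      constructor
      · intro hb
        have hsub : Finset.Iic i ⊆ S := by
          intro j hj
          simp [hS]
          exact hmono j i (Finset.mem_Iic.mp hj) hb
        have := Finset.card_le_card hsub
        rw [Fin.card_Iic] at this
        omega
      · intro hlt
        by_contra hb
        have hb' : b i = false := by simpa using hb
        have hsub : S ⊆ Finset.Iio i := by
          intro j hj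
          simp [hS] at hj
          simp [Finset.mem_Iio]
          by_contra hge
          have : i ≤ j := not_lt.mp hge
          have := hmono i j this hj
          simp [this] at hb'
        have := Finset.card_le_card hsub
        rw [Fin.card_Iio] at this
        omega
    rcases Bool.eq_false_or_eq_true (b i) with h1 | h0
    · have := key.mp h1
      simp [h1, this]
    · have hni : ¬ ((i : ℕ) < S.card) := fun hl => by simp [key.mpr hl] at h0
      simp [h0, hni]
  · rintro ⟨t, rfl⟩ s ⟨h0, h1⟩
    simp at h0 h1



    omega

lemma cnt_eq_zero_iff (n : ℕ) (b : Fin (n + 2) → Bool) :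
    cnt n b = 0 ↔ ∃ t : Fin (n + 3), b = fun i : Fin (n + 2) => decide ((i : ℕ) < (t : ℕ)) := by
  rw [← good_iff]
  rw [cnt, Finset.card_eq_zero, Finset.filter_eq_empty_iff]
  simp

lemma mem_ker_iff (n : ℕ) (f : EuclideanSpace ℂ (Fin (n + 2) → Bool)) :
    f ∈ LinearMap.ker (Hclock n) ↔ ∀ b, cnt n b ≠ 0 → f b = 0 := by
  rw [LinearMap.mem_ker]
  constructor
  · intro h b hb
    have : Hclock n f b = 0 := by rw [h]; rfl
    rw [Hclock_apply] at this
    rcases mul_eq_zero.mp this with h0 | h0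
    · exact absurd (Nat.cast_eq_zero.mp h0) hb
    · exact h0
  · intro h
    ext b
    show Hclock n f b = 0
    rw [Hclock_apply]
    rcases Nat.eq_zero_or_pos (cnt n b) with h0 | h0
    · simp [h0]
    · rw [h b (by omega)]; ring

lemma decomp (n : ℕ) (f : EuclideanSpace ℂ (Fin (n + 2) → Bool)) :
    f = ∑ b : Fin (n + 2) → Bool, f b • EuclideanSpace.single b (1 : ℂ) := by
  ext b'
  rw [WithLp.ofLp_sum, Finset.sum_apply]
  simp [EuclideanSpace.single_apply]

/-- **Kernel and spectral gap of the clock Hamiltonian.** For `T = n + 2 ≥ 2`: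
(i) the kernel of `H_clock` is exactly the span of the `T + 1` unary computational
basis states `|1^t 0^{T−t}⟩`, `t = 0, …, T`; and
(ii) every `φ` orthogonal to this kernel satisfies `⟨φ, H_clock φ⟩ ≥ ‖φ‖²`,
i.e. `λ(H_clock|_{K⊥}) ≥ 1` where `K = ker H_clock`. -/
theorem clock_hamiltonian_kernel_and_gap (n : ℕ) :
    LinearMap.ker (Hclock n) = Submodule.span ℂ (Set.range (unaryState n)) ∧
      ∀ φ : EuclideanSpace ℂ (Fin (n + 2) → Bool),
        φ ∈ (LinearMap.ker (Hclock n))ᗮ → (⟪φ, (Hclock n) φ⟫).re ≥ ‖φ‖ ^ 2 := by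
  have hker : LinearMap.ker (Hclock n) = Submodule.span ℂ (Set.range (unaryState n)) := by
    apply le_antisymm
    · intro f hf
      rw [mem_ker_iff] at hf
      rw [decomp n f]
      apply Submodule.sum_mem
      intro b _
      rcases Nat.eq_zero_or_pos (cnt n b) with h0 | h0
      · obtain ⟨t, rfl⟩ := (cnt_eq_zero_iff n b).mp h0
        exact Submodule.smul_mem _ _ (Submodule.subset_span ⟨t, rfl⟩)
      · rw [hf b (by omega)]
        simp
    · rw [Submodule.span_le]
      rintro _ ⟨t, rfl⟩
      rw [SetLike.mem_coe, mem_ker_iff]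
      intro b hb
      rw [unaryState, EuclideanSpace.single_apply]
      rw [if_neg]
      intro hbt
      exact hb ((cnt_eq_zero_iff n b).mpr ⟨t, hbt⟩)
  refine ⟨hker, ?_⟩
  intro φ hφ
  have hsupp : ∀ b, cnt n b = 0 → φ b = 0 := by
    intro b hb
    have hmem : EuclideanSpace.single b (1 : ℂ) ∈ LinearMap.ker (Hclock n) := by
      rw [mem_ker_iff]
      intro b' hb'
      rw [EuclideanSpace.single_apply, if_neg]
      rintro rfl
      exact hb' hb
    have := hφ _ hmem
    rwa [EuclideanSpace.inner_single_left, map_one, one_mul] at this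
  have hinner : (⟪φ, (Hclock n) φ⟫).re = ∑ b : Fin (n + 2) → Bool, (cnt n b : ℝ) * ‖φ b‖ ^ 2 := by
    rw [PiLp.inner_apply]
    rw [Complex.re_sum]
    apply Finset.sum_congr rfl
    intro b _
    rw [Hclock_apply]
    rw [RCLike.inner_apply]
    rw [show (cnt n b : ℂ) * φ b * (starRingEnd ℂ) (φ b) = (cnt n b : ℂ) * ((starRingEnd ℂ) (φ b) * φ b) by ring]
    rw [RCLike.conj_mul]
    rw [show ((cnt n b : ℂ)) = ((cnt n b : ℝ) : ℂ) by norm_cast]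
    norm_cast
    simp [Complex.mul_re]
    left
    rw [← Complex.ofReal_pow, Complex.ofReal_re]
  rw [hinner]
  have hnorm : ‖φ‖ ^ 2 = ∑ b : Fin (n + 2) → Bool, ‖φ b‖ ^ 2 := by
    rw [EuclideanSpace.norm_eq]
    rw [Real.sq_sqrt]
    positivity
  rw [hnorm, ge_iff_le]
  apply Finset.sum_le_sum
  intro b _
  rcases Nat.eq_zero_or_pos (cnt n b) with h0 | h0
  · simp [hsupp b h0]
  · nlinarith [sq_nonneg ‖φ b‖, (by exact_mod_cast h0 : (1:ℝ) ≤ (cnt n b : ℝ))]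
end
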